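/- Let A = [[a,b],[c,d]] ∈ Sp(1,1) and let q₁, q₂ ∈ Δ_ℍ. Then c·qᵢ + d ≠ 0 and gᵢ := (a·qᵢ + b)·(c·qᵢ + d)⁻¹ ∈ Δ_ℍ for i = 1, 2, and δ(g₁, g₂) = δ(q₁, q₂). Moreover δ(conj(q₁), conj(q₂)) = δ(q₁, q₂). That is, the quaternionic Poincaré distance is invariant under all Möbius transformations of Δ_ℍ and under quaternionic conjugation. -/

import Mathlib

open scoped Quaternion

/-- The pseudo-hyperbolic ratio on the quaternionic unit disc. -/
noncomputable def rhoH (q₁ q₂ : ℍ[ℝ]) : ℝ := ‖q₁ - q₂‖ * ‖1 - star q₁ * q₂‖⁻¹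

/-- The quaternionic Poincaré distance on the unit disc. -/
noncomputable def deltaH (q₁ q₂ : ℍ[ℝ]) : ℝ :=
  (1 / 2) * Real.log ((1 + rhoH q₁ q₂) / (1 - rhoH q₁ q₂))

open Quaternion

lemma normSq_key (x y : ℍ[ℝ]) :
    normSq (1 - star x * y) = normSq (x - y) + (1 - normSq x) * (1 - normSq y) := by
  simp only [normSq_def', re_sub, imI_sub, imJ_sub, imK_sub, re_one, imI_one, imJ_one, imK_one,
    re_mul, imI_mul, imJ_mul, imK_mul, re_star, imI_star, imJ_star, imK_star]
  ring

lemma normSq_conj_swap (x y : ℍ[ℝ]) :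
    normSq (1 - x * star y) = normSq (1 - star x * y) := by
  simp only [normSq_def', re_sub, imI_sub, imJ_sub, imK_sub, re_one, imI_one, imJ_one, imK_one,
    re_mul, imI_mul, imJ_mul, imK_mul, re_star, imI_star, imJ_star, imK_star]
  ring

lemma mul_self_aux {x y : ℝ} (hx : 0 ≤ x) (hy : 0 ≤ y) (h : x * x = y * y) : x = y :=
  (mul_self_inj hx hy).1 h

lemma sandwich (a b c d : ℍ[ℝ])
    (h00 : star a * a + -(star c * c) = 1)
    (h01 : star a * b + -(star c * d) = 0)
    (h11 : star b * b + -(star d * d) = -1)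
    (q₁ q₂ : ℍ[ℝ]) (ht₁ : c * q₁ + d ≠ 0) (ht₂ : c * q₂ + d ≠ 0) :
    star (c * q₁ + d) *
      (1 - star ((a * q₁ + b) * (c * q₁ + d)⁻¹) * ((a * q₂ + b) * (c * q₂ + d)⁻¹)) *
      (c * q₂ + d) = 1 - star q₁ * q₂ := by
  have e1 : star (c * q₁ + d) * star ((a * q₁ + b) * (c * q₁ + d)⁻¹) = star (a * q₁ + b) := by
    rw [star_mul, star_inv₀, ← mul_assoc, mul_inv_cancel₀ (star_ne_zero.2 ht₁), one_mul]
  have e2 : (a * q₂ + b) * (c * q₂ + d)⁻¹ * (c * q₂ + d) = a * q₂ + b := by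
    rw [mul_assoc, inv_mul_cancel₀ ht₂, mul_one]
  have k1 : star c * c - star a * a = -1 := by rw [← h00]; abel
  have k2 : star c * d - star a * b = 0 := by rw [← neg_eq_zero, ← h01]; abel
  have k3 : star d * c - star b * a = 0 := by
    have := congrArg star k2
    simpa [star_sub, star_mul] using this
  have k4 : star d * d - star b * b = 1 := by
    have : star d * d - star b * b = -(star b * b + -(star d * d)) := by abel
    rw [this, h11, neg_neg]
  calc star (c * q₁ + d) *
      (1 - star ((a * q₁ + b) * (c * q₁ + d)⁻¹) * ((a * q₂ + b) * (c * q₂ + d)⁻¹)) *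
      (c * q₂ + d)
      = star (c * q₁ + d) * (c * q₂ + d) -
        (star (c * q₁ + d) * star ((a * q₁ + b) * (c * q₁ + d)⁻¹)) *
        ((a * q₂ + b) * (c * q₂ + d)⁻¹ * (c * q₂ + d)) := by noncomm_ring
    _ = star (c * q₁ + d) * (c * q₂ + d) - star (a * q₁ + b) * (a * q₂ + b) := by rw [e1, e2]
    _ = star q₁ * ((star c * c - star a * a) * q₂) + star q₁ * (star c * d - star a * b) +
        (star d * c - star b * a) * q₂ + (star d * d - star b * b) := by
        simp only [star_add, star_mul]; noncomm_ring
    _ = 1 - star q₁ * q₂ := by rw [k1, k2, k3, k4]; noncomm_ring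

set_option maxHeartbeats 2000000 in
/-- The quaternionic Poincaré distance on `Δ_ℍ` is invariant under all Möbius
transformations (induced by `Sp(1,1)`) and under quaternionic conjugation. -/
theorem deltaH_invariant_under_moebius_and_conj (a b c d : ℍ[ℝ])
    (hA : (!![a, b; c, d]).conjTranspose * !![(1 : ℍ[ℝ]), 0; 0, -1] * !![a, b; c, d] =
      !![(1 : ℍ[ℝ]), 0; 0, -1])
    (q₁ q₂ : ℍ[ℝ]) (h₁ : ‖q₁‖ < 1) (h₂ : ‖q₂‖ < 1) :
    (c * q₁ + d ≠ 0 ∧ c * q₂ + d ≠ 0) ∧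
    ‖(a * q₁ + b) * (c * q₁ + d)⁻¹‖ < 1 ∧ ‖(a * q₂ + b) * (c * q₂ + d)⁻¹‖ < 1 ∧
    deltaH ((a * q₁ + b) * (c * q₁ + d)⁻¹) ((a * q₂ + b) * (c * q₂ + d)⁻¹) =
      deltaH q₁ q₂ ∧
    deltaH (star q₁) (star q₂) = deltaH q₁ q₂ := by
  have h00 := Matrix.ext_iff.2 hA 0 0
  have h01 := Matrix.ext_iff.2 hA 0 1
  have h11 := Matrix.ext_iff.2 hA 1 1
  simp [Matrix.mul_apply, Fin.sum_univ_two, Matrix.conjTranspose_apply] at h00 h01 h11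
  -- normSq relations
  have hna : normSq a = 1 + normSq c := by
    apply Quaternion.coe_injective
    rw [Quaternion.coe_add, Quaternion.coe_one, ← star_mul_self a, ← star_mul_self c, ← h00]
    abel
  have hnd' : normSq d = 1 + normSq b := by
    apply Quaternion.coe_injective
    rw [Quaternion.coe_add, Quaternion.coe_one, ← star_mul_self d, ← star_mul_self b]
    have h : star d * d = star b * b + 1 := by
      have h2 : star b * b = star d * d + -1 := by
        rw [← h11]; abel
      rw [h2]; abel
    rw [h]; abel
  have hmul : normSq a * normSq b = normSq c * normSq d := by
    have hab : star a * b = star c * d := by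
      rw [← sub_eq_zero, ← h01]
      abel
    calc normSq a * normSq b = normSq (star a * b) := by
          rw [normSq.map_mul, normSq_star]
      _ = normSq (star c * d) := by rw [hab]
      _ = normSq c * normSq d := by rw [normSq.map_mul, normSq_star]
  have hbc : normSq b = normSq c := by
    rw [hna, hnd'] at hmul
    linear_combination hmul
  have hnd : normSq d = 1 + normSq c := by rw [hnd', hbc]
  -- nonvanishing
  have hcd : ‖c‖ < ‖d‖ := by
    have h1 : normSq c = ‖c‖ * ‖c‖ := normSq_eq_norm_mul_self c
    have h2 : normSq d = ‖d‖ * ‖d‖ := normSq_eq_norm_mul_self d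
    nlinarith [norm_nonneg c, norm_nonneg d]
  have ht : ∀ q : ℍ[ℝ], ‖q‖ < 1 → c * q + d ≠ 0 := by
    intro q hq h0
    have hd : d = -(c * q) := eq_neg_of_add_eq_zero_left (by rw [← h0]; abel)
    have : ‖d‖ = ‖c‖ * ‖q‖ := by rw [hd, norm_neg, norm_mul]
    nlinarith [norm_nonneg c, norm_nonneg q]
  have ht₁ := ht q₁ h₁
  have ht₂ := ht q₂ h₂
  set G₁ := (a * q₁ + b) * (c * q₁ + d)⁻¹ with hG₁def
  set G₂ := (a * q₂ + b) * (c * q₂ + d)⁻¹ with hG₂def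
  have hsand12 := sandwich a b c d h00 h01 h11 q₁ q₂ ht₁ ht₂
  -- per-point disc bound
  have hdisc : ∀ q : ℍ[ℝ], c * q + d ≠ 0 →
      (1 - normSq ((a * q + b) * (c * q + d)⁻¹)) * normSq (c * q + d) = 1 - normSq q := by
    intro q hq
    have hs := sandwich a b c d h00 h01 h11 q q hq hq
    have hGc : (1 : ℍ[ℝ]) - star ((a * q + b) * (c * q + d)⁻¹) * ((a * q + b) * (c * q + d)⁻¹)
        = ((1 - normSq ((a * q + b) * (c * q + d)⁻¹) : ℝ) : ℍ[ℝ]) := by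
      rw [star_mul_self, Quaternion.coe_sub, Quaternion.coe_one]
    have hqc : (1 : ℍ[ℝ]) - star q * q = ((1 - normSq q : ℝ) : ℍ[ℝ]) := by
      rw [star_mul_self, Quaternion.coe_sub, Quaternion.coe_one]
    rw [hGc, hqc] at hs
    have hmid : star (c * q + d) *
        ((1 - normSq ((a * q + b) * (c * q + d)⁻¹) : ℝ) : ℍ[ℝ]) * (c * q + d)
        = (((1 - normSq ((a * q + b) * (c * q + d)⁻¹)) * normSq (c * q + d) : ℝ) : ℍ[ℝ]) := by
      rw [mul_assoc, Quaternion.coe_commutes, ← mul_assoc, star_mul_self, ← Quaternion.coe_mul,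
        mul_comm]
    rw [hmid] at hs
    exact Quaternion.coe_injective hs
  have hD1 := hdisc q₁ ht₁
  have hD2 := hdisc q₂ ht₂
  have hq1 : normSq q₁ < 1 := by
    have := normSq_eq_norm_mul_self q₁; nlinarith [norm_nonneg q₁]
  have hq2 : normSq q₂ < 1 := by
    have := normSq_eq_norm_mul_self q₂; nlinarith [norm_nonneg q₂]
  have hnt₁ : 0 < normSq (c * q₁ + d) :=
    lt_of_le_of_ne normSq_nonneg (fun h => ht₁ (normSq_eq_zero.1 h.symm))
  have hnt₂ : 0 < normSq (c * q₂ + d) :=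
    lt_of_le_of_ne normSq_nonneg (fun h => ht₂ (normSq_eq_zero.1 h.symm))
  have hGlt : ∀ q : ℍ[ℝ], ‖q‖ < 1 → ∀ hq : c * q + d ≠ 0,
      ‖(a * q + b) * (c * q + d)⁻¹‖ < 1 := by
    intro q hqn hq
    have hD := hdisc q hq
    have hnq : normSq q < 1 := by
      have := normSq_eq_norm_mul_self q; nlinarith [norm_nonneg q]
    have hnt : 0 < normSq (c * q + d) :=
      lt_of_le_of_ne normSq_nonneg (fun h => hq (normSq_eq_zero.1 h.symm))
    have hlt : normSq ((a * q + b) * (c * q + d)⁻¹) < 1 := by nlinarith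
    have := normSq_eq_norm_mul_self ((a * q + b) * (c * q + d)⁻¹)
    nlinarith [norm_nonneg ((a * q + b) * (c * q + d)⁻¹)]
  have hGn₁ := hGlt q₁ h₁ ht₁
  have hGn₂ := hGlt q₂ h₂ ht₂
  -- cross identity on normSq
  have hcross : normSq (c * q₁ + d) * normSq (1 - star G₁ * G₂) * normSq (c * q₂ + d) =
      normSq (1 - star q₁ * q₂) := by
    have h := congrArg normSq hsand12
    simp only [normSq.map_mul, normSq_star] at h
    exact h
  have hkeyG := normSq_key G₁ G₂
  have hkeyq := normSq_key q₁ q₂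
  have hGdiff : normSq (G₁ - G₂) * (normSq (c * q₁ + d) * normSq (c * q₂ + d)) =
      normSq (q₁ - q₂) := by
    linear_combination (-(normSq (c * q₁ + d) * normSq (c * q₂ + d))) * hkeyG + hcross + hkeyq
      - (1 - normSq G₂) * normSq (c * q₂ + d) * hD1 - (1 - normSq q₁) * hD2
  -- translate to norms
  have hne : (1 : ℍ[ℝ]) - star q₁ * q₂ ≠ 0 := by
    intro h
    have h1 : star q₁ * q₂ = 1 := (sub_eq_zero.1 h).symm
    have : ‖star q₁ * q₂‖ < 1 := by
      rw [norm_mul, Quaternion.norm_star]; nlinarith [norm_nonneg q₁, norm_nonneg q₂]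
    rw [h1, norm_one] at this; exact lt_irrefl 1 this
  have hvpos : 0 < ‖(1 : ℍ[ℝ]) - star q₁ * q₂‖ := norm_pos_iff.2 hne
  have hs₁ : 0 < ‖c * q₁ + d‖ := norm_pos_iff.2 ht₁
  have hs₂ : 0 < ‖c * q₂ + d‖ := norm_pos_iff.2 ht₂
  have hu : ‖G₁ - G₂‖ * (‖c * q₁ + d‖ * ‖c * q₂ + d‖) = ‖q₁ - q₂‖ := by
    apply mul_self_aux (by positivity) (norm_nonneg _)
    rw [normSq_eq_norm_mul_self, normSq_eq_norm_mul_self, normSq_eq_norm_mul_self,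
      normSq_eq_norm_mul_self] at hGdiff
    linear_combination hGdiff
  have hv : ‖1 - star G₁ * G₂‖ * (‖c * q₁ + d‖ * ‖c * q₂ + d‖) = ‖1 - star q₁ * q₂‖ := by
    apply mul_self_aux (by positivity) (norm_nonneg _)
    rw [normSq_eq_norm_mul_self, normSq_eq_norm_mul_self, normSq_eq_norm_mul_self,
      normSq_eq_norm_mul_self] at hcross
    linear_combination hcross
  have hvG : (0:ℝ) < ‖1 - star G₁ * G₂‖ := by
    by_contra hle
    push_neg at hle
    have hv0 : ‖1 - star G₁ * G₂‖ = 0 := le_antisymm hle (norm_nonneg _)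
    rw [hv0, zero_mul] at hv
    exact absurd hv.symm (ne_of_gt hvpos)
  have hrho : rhoH G₁ G₂ = rhoH q₁ q₂ := by
    unfold rhoH
    rw [← hu, ← hv]
    field_simp
  have hrhostar : rhoH (star q₁) (star q₂) = rhoH q₁ q₂ := by
    unfold rhoH
    congr 1
    · rw [← star_sub, Quaternion.norm_star]
    · congr 1
      apply mul_self_aux (norm_nonneg _) (norm_nonneg _)
      rw [← normSq_eq_norm_mul_self, ← normSq_eq_norm_mul_self, star_star]
      exact normSq_conj_swap q₁ q₂
  exact ⟨⟨ht₁, ht₂⟩, hGn₁, hGn₂, by unfold deltaH; rw [hrho], by unfold deltaH; rw [hrhostar]⟩
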